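/- For any positive integers L, y, z with y odd and y > 1, setting m = 2(y−1)z, every coefficient in the power series expansion of 1/((q^z; q^m)_L (q^{m+2z}; q^{2m})_L) − 1/((q^{yz}; q^m)_L (q^{2z}; q^{2m})_L) is nonnegative. -/

import Mathlib

open Finset PowerSeries

/-- `(q^c; q^m)_L = ∏_{j=0}^{L-1} (1 - q^{c+jm})` as a formal power series over `ℚ`. -/
noncomputable def qp (c m L : ℕ) : PowerSeries ℚ :=
  ∏ j ∈ Finset.range L, (1 - (PowerSeries.X : PowerSeries ℚ) ^ (c + j * m))

/-- geometric series `1/(1-q^e)` -/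
noncomputable def gs (e : ℕ) : PowerSeries ℚ :=
  PowerSeries.mk fun n => if e ∣ n then 1 else 0

/-- coefficientwise nonnegativity -/
def NN (f : PowerSeries ℚ) : Prop := ∀ n, 0 ≤ PowerSeries.coeff (R := ℚ) n f

lemma NN.mul {f h : PowerSeries ℚ} (hf : NN f) (hh : NN h) : NN (f * h) := by
  intro n
  rw [PowerSeries.coeff_mul]
  exact Finset.sum_nonneg fun p _ => mul_nonneg (hf p.1) (hh p.2)

lemma NN_gs (e : ℕ) : NN (gs e) := by
  intro n; rw [gs, PowerSeries.coeff_mk]; split <;> norm_num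

lemma NN_X_pow (a : ℕ) : NN ((PowerSeries.X : PowerSeries ℚ) ^ a) := by
  intro n; rw [PowerSeries.coeff_X_pow]; split <;> norm_num

lemma NN.sum {s : Finset ℕ} {f : ℕ → PowerSeries ℚ} (h : ∀ i ∈ s, NN (f i)) :
    NN (∑ i ∈ s, f i) := by
  intro n
  rw [map_sum]
  exact Finset.sum_nonneg fun i hi => h i hi n

lemma NN_one : NN (1 : PowerSeries ℚ) := by
  intro n; rw [PowerSeries.coeff_one]; split <;> norm_num

lemma NN.prod {s : Finset ℕ} {f : ℕ → PowerSeries ℚ} (h : ∀ i ∈ s, NN (f i)) :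
    NN (∏ i ∈ s, f i) := by
  classical
  induction s using Finset.induction with
  | empty => rw [Finset.prod_empty]; exact NN_one
  | insert _ _ hx ih =>
      rw [Finset.prod_insert hx]
      exact (h _ (Finset.mem_insert_self _ _)).mul
        (ih fun i hi => h i (Finset.mem_insert_of_mem hi))

lemma one_sub_mul_gs {e : ℕ} (he : 0 < e) :
    (1 - (PowerSeries.X : PowerSeries ℚ) ^ e) * gs e = 1 := by
  ext n
  rw [sub_mul, one_mul, map_sub]
  rw [PowerSeries.coeff_X_pow_mul']
  rw [gs, PowerSeries.coeff_mk, PowerSeries.coeff_one]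
  by_cases hn : n = 0
  · subst hn
    have : ¬ e ≤ 0 := by omega
    simp [this]
  · by_cases hle : e ≤ n
    · have hiff : e ∣ n ↔ e ∣ n - e := by
        constructor
        · intro h; exact Nat.dvd_sub h dvd_rfl
        · intro h
          have : n - e + e = n := by omega
          exact this ▸ Nat.dvd_add h dvd_rfl
      by_cases hd : e ∣ n
      · simp [hle, hn, hd, hiff.mp hd]
      · simp [hle, hn, hd, show ¬ e ∣ n - e from fun h => hd (hiff.mpr h)]
    · have hnd : ¬ e ∣ n := fun h => hle (Nat.le_of_dvd (Nat.pos_of_ne_zero hn) h)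
      simp [hle, hn, hnd]

lemma geom_gs {e : ℕ} (he : 0 < e) (k : ℕ) :
    (1 - (PowerSeries.X : PowerSeries ℚ) ^ (e * k)) * gs e
      = ∑ t ∈ Finset.range k, (PowerSeries.X : PowerSeries ℚ) ^ (e * t) := by
  have h : (1 : PowerSeries ℚ) - (PowerSeries.X : PowerSeries ℚ) ^ (e * k)
      = (∑ t ∈ Finset.range k, (PowerSeries.X : PowerSeries ℚ) ^ (e * t))
        * (1 - (PowerSeries.X : PowerSeries ℚ) ^ e) := by
    have h2 := geom_sum_mul_neg ((PowerSeries.X : PowerSeries ℚ) ^ e) k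
    calc (1 : PowerSeries ℚ) - (PowerSeries.X : PowerSeries ℚ) ^ (e * k)
        = 1 - ((PowerSeries.X : PowerSeries ℚ) ^ e) ^ k := by rw [pow_mul]
      _ = (∑ t ∈ Finset.range k, ((PowerSeries.X : PowerSeries ℚ) ^ e) ^ t)
            * (1 - (PowerSeries.X : PowerSeries ℚ) ^ e) := h2.symm
      _ = (∑ t ∈ Finset.range k, (PowerSeries.X : PowerSeries ℚ) ^ (e * t))
            * (1 - (PowerSeries.X : PowerSeries ℚ) ^ e) := by
            congr 1
            exact Finset.sum_congr rfl fun t _ => (pow_mul _ e t).symm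
  rw [h, mul_assoc, one_sub_mul_gs he, mul_one]

/-- key algebraic identity -/
lemma key_id {a D : ℕ} (ha : 0 < a) (hD : 0 < D) :
    gs a * gs (2 * (a + D)) - gs (2 * a) * gs (a + D)
      = (PowerSeries.X : PowerSeries ℚ) ^ a
          * (1 - (PowerSeries.X : PowerSeries ℚ) ^ D)
          * (gs (2 * a) * gs (2 * (a + D))) := by
  have e1 := one_sub_mul_gs (show 0 < a from ha)
  have e2 := one_sub_mul_gs (show 0 < a + D by omega)
  have e3 := one_sub_mul_gs (show 0 < 2 * a by omega)
  have e4 := one_sub_mul_gs (show 0 < 2 * (a + D) by omega)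
  have n1 := left_ne_zero_of_mul_eq_one e1
  have n2 := left_ne_zero_of_mul_eq_one e2
  have n3 := left_ne_zero_of_mul_eq_one e3
  have n4 := left_ne_zero_of_mul_eq_one e4
  set X' : PowerSeries ℚ := PowerSeries.X with hX'
  apply mul_left_cancel₀
    (show (1 - X' ^ a) * (1 - X' ^ (a + D)) * (1 - X' ^ (2 * a)) * (1 - X' ^ (2 * (a + D))) ≠ 0
      from mul_ne_zero (mul_ne_zero (mul_ne_zero n1 n2) n3) n4)
  have L1 : (1 - X' ^ a) * (1 - X' ^ (a + D)) * (1 - X' ^ (2 * a)) * (1 - X' ^ (2 * (a + D)))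
        * (gs a * gs (2 * (a + D)) - gs (2 * a) * gs (a + D))
      = (1 - X' ^ (a + D)) * (1 - X' ^ (2 * a))
          * (((1 - X' ^ a) * gs a) * ((1 - X' ^ (2 * (a + D))) * gs (2 * (a + D))))
        - (1 - X' ^ a) * (1 - X' ^ (2 * (a + D)))
          * (((1 - X' ^ (2 * a)) * gs (2 * a)) * ((1 - X' ^ (a + D)) * gs (a + D))) := by
    ring
  have L2 : (1 - X' ^ a) * (1 - X' ^ (a + D)) * (1 - X' ^ (2 * a)) * (1 - X' ^ (2 * (a + D)))
        * (X' ^ a * (1 - X' ^ D) * (gs (2 * a) * gs (2 * (a + D))))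
      = X' ^ a * (1 - X' ^ D) * ((1 - X' ^ a) * (1 - X' ^ (a + D)))
          * (((1 - X' ^ (2 * a)) * gs (2 * a)) * ((1 - X' ^ (2 * (a + D))) * gs (2 * (a + D)))) := by
    ring
  rw [L1, L2, e1, e2, e3, e4]
  ring

lemma qp_mul_gs (c m L : ℕ) (hc : 0 < c) :
    qp c m L * ∏ j ∈ Finset.range L, gs (c + j * m) = 1 := by
  rw [qp, ← Finset.prod_mul_distrib]
  rw [Finset.prod_congr rfl fun j (_ : j ∈ Finset.range L) =>
    one_sub_mul_gs (show 0 < c + j * m by omega)]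
  exact Finset.prod_const_one

lemma qp_inv_pair (c1 m1 c2 m2 L : ℕ) (h1 : 0 < c1) (h2 : 0 < c2) :
    (qp c1 m1 L * qp c2 m2 L)⁻¹
      = (∏ j ∈ Finset.range L, gs (c1 + j * m1)) * (∏ j ∈ Finset.range L, gs (c2 + j * m2)) := by
  have hmul : (qp c1 m1 L * qp c2 m2 L)
      * ((∏ j ∈ Finset.range L, gs (c1 + j * m1)) * (∏ j ∈ Finset.range L, gs (c2 + j * m2))) = 1 := by
    rw [mul_mul_mul_comm, qp_mul_gs c1 m1 L h1, qp_mul_gs c2 m2 L h2, one_mul]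
  have hc : PowerSeries.constantCoeff (qp c1 m1 L * qp c2 m2 L) ≠ 0 := by
    intro h0
    have := congrArg PowerSeries.constantCoeff hmul
    rw [map_mul, h0, zero_mul, map_one] at this
    exact zero_ne_one this
  rw [PowerSeries.inv_eq_iff_mul_eq_one hc, mul_comm]
  exact hmul

/-- exponent of the `i`-th pair -/
def aE (z k i : ℕ) : ℕ := z + i * (4 * (k * z))

noncomputable def Ap (z k i : ℕ) : PowerSeries ℚ :=
  gs (aE z k i) * gs (2 * (aE z k i + 2 * (k * z)))

noncomputable def Bp (z k i : ℕ) : PowerSeries ℚ :=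
  gs (aE z k i + 2 * (k * z)) * gs (2 * (aE z k i))

noncomputable def Pt (z k L i : ℕ) : PowerSeries ℚ :=
  (∏ j ∈ Finset.range i, Ap z k j) * (∏ j ∈ Finset.Ico i L, Bp z k j)

lemma NN_Ap (z k i : ℕ) : NN (Ap z k i) := (NN_gs _).mul (NN_gs _)
lemma NN_Bp (z k i : ℕ) : NN (Bp z k i) := (NN_gs _).mul (NN_gs _)

lemma step_NN (z k L i : ℕ) (hz : 0 < z) (hk : 0 < k) (hi : i < L) :
    NN (Pt z k L (i + 1) - Pt z k L i) := by
  have haE : 0 < aE z k i := Nat.lt_of_lt_of_le hz (Nat.le_add_right _ _)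
  have hkz : 0 < k * z := Nat.mul_pos hk hz
  have hD : 0 < 2 * (k * z) := by omega
  have hstep : Pt z k L (i + 1) - Pt z k L i
      = ((∏ j ∈ Finset.range i, Ap z k j) * (∏ j ∈ Finset.Ico (i + 1) L, Bp z k j))
          * (Ap z k i - Bp z k i) := by
    unfold Pt
    rw [Finset.prod_range_succ, Finset.prod_eq_prod_Ico_succ_bot hi]
    ring
  have hkey : Ap z k i - Bp z k i
      = (PowerSeries.X : PowerSeries ℚ) ^ (aE z k i)
          * (1 - (PowerSeries.X : PowerSeries ℚ) ^ (2 * (k * z)))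
          * (gs (2 * aE z k i) * gs (2 * (aE z k i + 2 * (k * z)))) := by
    unfold Ap Bp
    rw [mul_comm (gs (aE z k i + 2 * (k * z)))]
    exact key_id haE hD
  rw [hstep, hkey]
  have hNNIco : NN (∏ j ∈ Finset.Ico (i + 1) L, Bp z k j) :=
    NN.prod fun j _ => NN_Bp z k j
  rcases Nat.eq_zero_or_pos i with hi0 | hip
  · subst hi0
    have ha0 : aE z k 0 = z := by unfold aE; simp
    have hgeom : (1 - (PowerSeries.X : PowerSeries ℚ) ^ (2 * (k * z))) * gs (2 * z)
        = ∑ t ∈ Finset.range k, (PowerSeries.X : PowerSeries ℚ) ^ ((2 * z) * t) := by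
      have h2 : 2 * (k * z) = (2 * z) * k := by ring
      rw [h2]; exact geom_gs (by omega) k
    rw [ha0, Finset.prod_range_zero]
    have hre : (1 : PowerSeries ℚ) * (∏ j ∈ Finset.Ico (0 + 1) L, Bp z k j)
          * ((PowerSeries.X : PowerSeries ℚ) ^ z
              * (1 - (PowerSeries.X : PowerSeries ℚ) ^ (2 * (k * z)))
              * (gs (2 * z) * gs (2 * (z + 2 * (k * z)))))
        = (∏ j ∈ Finset.Ico (0 + 1) L, Bp z k j)
            * ((PowerSeries.X : PowerSeries ℚ) ^ z
              * ((∑ t ∈ Finset.range k, (PowerSeries.X : PowerSeries ℚ) ^ ((2 * z) * t))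
                * gs (2 * (z + 2 * (k * z))))) := by
      linear_combination (∏ j ∈ Finset.Ico (0 + 1) L, Bp z k j)
        * (PowerSeries.X : PowerSeries ℚ) ^ z * gs (2 * (z + 2 * (k * z))) * hgeom
    rw [hre]
    exact hNNIco.mul ((NN_X_pow z).mul ((NN.sum fun t _ => NN_X_pow _).mul (NN_gs _)))
  · have hA0 : Ap z k 0 = gs z * gs (2 * (z + 2 * (k * z))) := by
      unfold Ap aE; simp
    rw [Finset.range_eq_Ico, Finset.prod_eq_prod_Ico_succ_bot hip, hA0]
    have hgeom : (1 - (PowerSeries.X : PowerSeries ℚ) ^ (2 * (k * z))) * gs z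
        = ∑ t ∈ Finset.range (2 * k), (PowerSeries.X : PowerSeries ℚ) ^ (z * t) := by
      have h2 : 2 * (k * z) = z * (2 * k) := by ring
      rw [h2]; exact geom_gs hz (2 * k)
    have hre : gs z * gs (2 * (z + 2 * (k * z))) * (∏ j ∈ Finset.Ico (0 + 1) i, Ap z k j)
          * (∏ j ∈ Finset.Ico (i + 1) L, Bp z k j)
          * ((PowerSeries.X : PowerSeries ℚ) ^ (aE z k i)
              * (1 - (PowerSeries.X : PowerSeries ℚ) ^ (2 * (k * z)))
              * (gs (2 * aE z k i) * gs (2 * (aE z k i + 2 * (k * z)))))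
        = gs (2 * (z + 2 * (k * z))) * ((∏ j ∈ Finset.Ico (0 + 1) i, Ap z k j)
            * ((∏ j ∈ Finset.Ico (i + 1) L, Bp z k j)
              * ((PowerSeries.X : PowerSeries ℚ) ^ (aE z k i)
                * ((∑ t ∈ Finset.range (2 * k), (PowerSeries.X : PowerSeries ℚ) ^ (z * t))
                  * (gs (2 * aE z k i) * gs (2 * (aE z k i + 2 * (k * z)))))))) := by
      linear_combination gs (2 * (z + 2 * (k * z))) * (∏ j ∈ Finset.Ico (0 + 1) i, Ap z k j)
        * (∏ j ∈ Finset.Ico (i + 1) L, Bp z k j) * (PowerSeries.X : PowerSeries ℚ) ^ (aE z k i)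
        * (gs (2 * aE z k i) * gs (2 * (aE z k i + 2 * (k * z)))) * hgeom
    rw [hre]
    exact (NN_gs _).mul ((NN.prod fun j _ => NN_Ap z k j).mul (hNNIco.mul
      ((NN_X_pow _).mul ((NN.sum fun t _ => NN_X_pow _).mul ((NN_gs _).mul (NN_gs _))))))

lemma telescope_NN (z k L : ℕ) (hz : 0 < z) (hk : 0 < k) :
    NN ((∏ j ∈ Finset.range L, Ap z k j) - (∏ j ∈ Finset.range L, Bp z k j)) := by
  have hFG : (∏ j ∈ Finset.range L, Ap z k j) - (∏ j ∈ Finset.range L, Bp z k j)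
      = ∑ i ∈ Finset.range L, (Pt z k L (i + 1) - Pt z k L i) := by
    rw [Finset.sum_range_sub (fun i => Pt z k L i)]
    unfold Pt
    rw [Finset.Ico_self, Finset.prod_empty, mul_one, Finset.range_zero, Finset.prod_empty,
      one_mul, Finset.range_eq_Ico]
  rw [hFG]
  exact NN.sum fun i hi => step_NN z k L i hz hk (Finset.mem_range.mp hi)

theorem lecture_hall_even (L y z m : ℕ) (hL : 0 < L) (hy : 1 < y) (hodd : Odd y)
    (hz : 0 < z) (hm : m = 2 * (y - 1) * z) (x : ℕ) :
    0 ≤ PowerSeries.coeff (R := ℚ) x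
      ((qp z m L * qp (m + 2 * z) (2 * m) L)⁻¹
        - (qp (y * z) m L * qp (2 * z) (2 * m) L)⁻¹) := by
  obtain ⟨k, hk⟩ := hodd
  have hkpos : 0 < k := by omega
  have hm4 : m = 4 * (k * z) := by
    rw [hm, show y - 1 = 2 * k by omega]; ring
  have hyz : 0 < y * z := Nat.mul_pos (by omega) hz
  rw [qp_inv_pair z m (m + 2 * z) (2 * m) L hz (by omega),
      qp_inv_pair (y * z) m (2 * z) (2 * m) L hyz (by omega)]
  have hA : (∏ j ∈ Finset.range L, gs (z + j * m))
        * (∏ j ∈ Finset.range L, gs (m + 2 * z + j * (2 * m)))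
      = ∏ j ∈ Finset.range L, Ap z k j := by
    rw [← Finset.prod_mul_distrib]
    refine Finset.prod_congr rfl fun j _ => ?_
    unfold Ap aE
    rw [show z + j * m = z + j * (4 * (k * z)) by rw [hm4],
        show m + 2 * z + j * (2 * m) = 2 * (z + j * (4 * (k * z)) + 2 * (k * z)) by
          rw [hm4]; ring]
  have hB : (∏ j ∈ Finset.range L, gs (y * z + j * m))
        * (∏ j ∈ Finset.range L, gs (2 * z + j * (2 * m)))
      = ∏ j ∈ Finset.range L, Bp z k j := by
    rw [← Finset.prod_mul_distrib]
    refine Finset.prod_congr rfl fun j _ => ?_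
    unfold Bp aE
    rw [show y * z + j * m = z + j * (4 * (k * z)) + 2 * (k * z) by
          rw [hm4, hk]; ring,
        show 2 * z + j * (2 * m) = 2 * (z + j * (4 * (k * z))) by rw [hm4]; ring]
  rw [hA, hB]
  exact telescope_NN z k L hz hkpos x
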